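/- Over a field $\Bbbk$, the bound quiver given by the $2\times 2$ commutative grid (vertices $1,2,3,4$, arrows $1\to2$, $1\to3$, $2\to4$, $3\to4$, relation: the two paths $1 \to 4$ agree) has exactly eleven isomorphism classes of indecomposable representations, namely the representations $M(\nu_1,\nu_2,\nu_3,\nu_4)$ with all $\nu_i \in \{0,1\}$, identity maps where possible, for the dimension vectors $(1,0,0,0)$, $(0,1,0,0)$, $(0,0,1,0)$, $(0,0,0,1)$, $(1,1,0,0)$, $(1,0,1,0)$, $(0,1,0,1)$, $(0,0,1,1)$, $(1,1,1,0)$, $(0,1,1,1)$, $(1,1,1,1)$. -/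

import Mathlib

/-- A finite-dimensional representation of the commutative `2 × 2` grid bound quiver. -/
structure GridRep (𝕜 : Type) [Field 𝕜] : Type 1 where
  V1 : Type
  V2 : Type
  V3 : Type
  V4 : Type
  [g1 : AddCommGroup V1]
  [g2 : AddCommGroup V2]
  [g3 : AddCommGroup V3]
  [g4 : AddCommGroup V4]
  [m1 : Module 𝕜 V1]
  [m2 : Module 𝕜 V2]
  [m3 : Module 𝕜 V3]
  [m4 : Module 𝕜 V4]
  [fd1 : FiniteDimensional 𝕜 V1]
  [fd2 : FiniteDimensional 𝕜 V2]
  [fd3 : FiniteDimensional 𝕜 V3]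
  [fd4 : FiniteDimensional 𝕜 V4]
  f12 : V1 →ₗ[𝕜] V2
  f13 : V1 →ₗ[𝕜] V3
  f24 : V2 →ₗ[𝕜] V4
  f34 : V3 →ₗ[𝕜] V4
  comm : f24 ∘ₗ f12 = f34 ∘ₗ f13

attribute [instance] GridRep.g1 GridRep.g2 GridRep.g3 GridRep.g4
  GridRep.m1 GridRep.m2 GridRep.m3 GridRep.m4
  GridRep.fd1 GridRep.fd2 GridRep.fd3 GridRep.fd4

variable {𝕜 : Type} [Field 𝕜]

/-- An isomorphism of grid representations. -/
structure GridIso (A B : GridRep 𝕜) : Type where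
  e1 : A.V1 ≃ₗ[𝕜] B.V1
  e2 : A.V2 ≃ₗ[𝕜] B.V2
  e3 : A.V3 ≃ₗ[𝕜] B.V3
  e4 : A.V4 ≃ₗ[𝕜] B.V4
  c12 : e2.toLinearMap ∘ₗ A.f12 = B.f12 ∘ₗ e1.toLinearMap
  c13 : e3.toLinearMap ∘ₗ A.f13 = B.f13 ∘ₗ e1.toLinearMap
  c24 : e4.toLinearMap ∘ₗ A.f24 = B.f24 ∘ₗ e2.toLinearMap
  c34 : e4.toLinearMap ∘ₗ A.f34 = B.f34 ∘ₗ e3.toLinearMap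

/-- Direct sum of two grid representations. -/
def GridRep.dsum (A B : GridRep 𝕜) : GridRep 𝕜 where
  V1 := A.V1 × B.V1
  V2 := A.V2 × B.V2
  V3 := A.V3 × B.V3
  V4 := A.V4 × B.V4
  f12 := A.f12.prodMap B.f12
  f13 := A.f13.prodMap B.f13
  f24 := A.f24.prodMap B.f24
  f34 := A.f34.prodMap B.f34
  comm := by
    apply LinearMap.ext
    intro x
    have hA := LinearMap.congr_fun A.comm x.1
    have hB := LinearMap.congr_fun B.comm x.2
    simp only [LinearMap.comp_apply, LinearMap.prodMap_apply] at *
    exact Prod.ext hA hB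

/-- The zero representation predicate. -/
def GridRep.IsZero (A : GridRep 𝕜) : Prop :=
  Subsingleton A.V1 ∧ Subsingleton A.V2 ∧ Subsingleton A.V3 ∧ Subsingleton A.V4

/-- Indecomposability of a grid representation. -/
def GridRep.Indec (R : GridRep 𝕜) : Prop :=
  ¬ R.IsZero ∧ ∀ A B : GridRep 𝕜, Nonempty (GridIso R (A.dsum B)) → A.IsZero ∨ B.IsZero

/-- The "identity where possible" linear map `𝕜^a → 𝕜^b`. -/
def indMap (𝕜 : Type) [Field 𝕜] (a b : ℕ) : (Fin a → 𝕜) →ₗ[𝕜] (Fin b → 𝕜) where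
  toFun v := fun i => if h : (i : ℕ) < a then v ⟨i, h⟩ else 0
  map_add' u v := by funext i; by_cases h : (i : ℕ) < a <;> simp [h]
  map_smul' c v := by funext i; by_cases h : (i : ℕ) < a <;> simp [h]

@[simp] lemma indMap_apply (a b : ℕ) (v : Fin a → 𝕜) (i : Fin b) :
    indMap 𝕜 a b v i = if h : (i : ℕ) < a then v ⟨i, h⟩ else 0 := rfl

/-- The indicator representation `M(a,b,c,d)` (dimensions in `{0,1}` in practice), with
identity maps where possible and zero maps otherwise. -/
def M (𝕜 : Type) [Field 𝕜] (a b c d : ℕ)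
    (h : ∀ x : ℕ, x < a → x < d → (x < b ↔ x < c)) : GridRep 𝕜 where
  V1 := Fin a → 𝕜
  V2 := Fin b → 𝕜
  V3 := Fin c → 𝕜
  V4 := Fin d → 𝕜
  f12 := indMap 𝕜 a b
  f13 := indMap 𝕜 a c
  f24 := indMap 𝕜 b d
  f34 := indMap 𝕜 c d
  comm := by
    refine LinearMap.ext fun v => funext fun i => ?_
    have hd := i.isLt
    simp only [LinearMap.comp_apply, indMap_apply]
    by_cases ha : (i : ℕ) < a
    · have hbc := h i ha hd
      by_cases hb : (i : ℕ) < b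
      · have hc : (i : ℕ) < c := hbc.mp hb
        rw [dif_pos hb, dif_pos hc]
      · have hc : ¬ (i : ℕ) < c := fun hc' => hb (hbc.mpr hc')
        rw [dif_neg hb, dif_neg hc]
    · by_cases hb : (i : ℕ) < b <;> by_cases hc : (i : ℕ) < c <;>
        simp [hb, hc, ha]

/-- The eleven indicator representations of the commutative `2 × 2` grid. -/
def elevenList (𝕜 : Type) [Field 𝕜] : List (GridRep 𝕜) :=
  [M 𝕜 1 0 0 0 (by intro x hx hd; omega), M 𝕜 0 1 0 0 (by intro x hx hd; omega),
   M 𝕜 0 0 1 0 (by intro x hx hd; omega), M 𝕜 0 0 0 1 (by intro x hx hd; omega),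
   M 𝕜 1 1 0 0 (by intro x hx hd; omega), M 𝕜 1 0 1 0 (by intro x hx hd; omega),
   M 𝕜 0 1 0 1 (by intro x hx hd; omega), M 𝕜 0 0 1 1 (by intro x hx hd; omega),
   M 𝕜 1 1 1 0 (by intro x hx hd; omega), M 𝕜 0 1 1 1 (by intro x hx hd; omega),
   M 𝕜 1 1 1 1 (by intro x hx hd; omega)]


section Aux

open Module Submodule

variable {V W V' W' : Type} [AddCommGroup V] [Module 𝕜 V] [AddCommGroup W] [Module 𝕜 W]
  [AddCommGroup V'] [Module 𝕜 V'] [AddCommGroup W'] [Module 𝕜 W']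

lemma extDom [Subsingleton V] (f g : V →ₗ[𝕜] W) : f = g := by
  ext v; rw [Subsingleton.elim v 0]; simp

lemma extCod [Subsingleton W] (f g : V →ₗ[𝕜] W) : f = g := by
  ext v; exact Subsingleton.elim _ _

/-- Composition of commuting squares for `symm`. -/
lemma squareSymm {e : V ≃ₗ[𝕜] V'} {e' : W ≃ₗ[𝕜] W'} {f : V →ₗ[𝕜] W} {f' : V' →ₗ[𝕜] W'}
    (h : e'.toLinearMap ∘ₗ f = f' ∘ₗ e.toLinearMap) :
    e'.symm.toLinearMap ∘ₗ f' = f ∘ₗ e.symm.toLinearMap := by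
  ext v
  apply e'.injective
  have := LinearMap.congr_fun h (e.symm v)
  simp only [LinearMap.comp_apply, LinearEquiv.coe_coe] at this ⊢
  simp [this]

def isoRefl (A : GridRep 𝕜) : GridIso A A :=
  ⟨LinearEquiv.refl 𝕜 _, LinearEquiv.refl 𝕜 _, LinearEquiv.refl 𝕜 _, LinearEquiv.refl 𝕜 _,
    by ext v; rfl, by ext v; rfl, by ext v; rfl, by ext v; rfl⟩

def isoSymm {A B : GridRep 𝕜} (e : GridIso A B) : GridIso B A :=
  ⟨e.e1.symm, e.e2.symm, e.e3.symm, e.e4.symm,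
    squareSymm e.c12, squareSymm e.c13, squareSymm e.c24, squareSymm e.c34⟩

def isoTrans {A B C : GridRep 𝕜} (u : GridIso A B) (v : GridIso B C) : GridIso A C :=
  ⟨u.e1.trans v.e1, u.e2.trans v.e2, u.e3.trans v.e3, u.e4.trans v.e4,
    by ext x; have h1 := LinearMap.congr_fun u.c12 x
       have h2 := LinearMap.congr_fun v.c12 (u.e1 x)
       simp only [LinearMap.comp_apply, LinearEquiv.coe_coe] at h1 h2 ⊢
       simp [LinearEquiv.trans_apply, h1, h2],
    by ext x; have h1 := LinearMap.congr_fun u.c13 x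
       have h2 := LinearMap.congr_fun v.c13 (u.e1 x)
       simp only [LinearMap.comp_apply, LinearEquiv.coe_coe] at h1 h2 ⊢
       simp [LinearEquiv.trans_apply, h1, h2],
    by ext x; have h1 := LinearMap.congr_fun u.c24 x
       have h2 := LinearMap.congr_fun v.c24 (u.e2 x)
       simp only [LinearMap.comp_apply, LinearEquiv.coe_coe] at h1 h2 ⊢
       simp [LinearEquiv.trans_apply, h1, h2],
    by ext x; have h1 := LinearMap.congr_fun u.c34 x
       have h2 := LinearMap.congr_fun v.c34 (u.e3 x)
       simp only [LinearMap.comp_apply, LinearEquiv.coe_coe] at h1 h2 ⊢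
       simp [LinearEquiv.trans_apply, h1, h2]⟩

def isoDsumCongr {A B A' B' : GridRep 𝕜} (u : GridIso A A') (v : GridIso B B') :
    GridIso (A.dsum B) (A'.dsum B') := by
  refine ⟨u.e1.prodCongr v.e1, u.e2.prodCongr v.e2, u.e3.prodCongr v.e3, u.e4.prodCongr v.e4,
    ?_, ?_, ?_, ?_⟩ <;>
  · apply LinearMap.ext; intro x
    first
    | (have h1 := LinearMap.congr_fun u.c12 x.1
       have h2 := LinearMap.congr_fun v.c12 x.2
       simp only [LinearMap.comp_apply, LinearEquiv.coe_coe] at h1 h2 ⊢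
       simp only [GridRep.dsum, LinearMap.prodMap_apply, LinearEquiv.prodCongr_apply, Prod.map]
       exact Prod.ext h1 h2)
    | (have h1 := LinearMap.congr_fun u.c13 x.1
       have h2 := LinearMap.congr_fun v.c13 x.2
       simp only [LinearMap.comp_apply, LinearEquiv.coe_coe] at h1 h2 ⊢
       simp only [GridRep.dsum, LinearMap.prodMap_apply, LinearEquiv.prodCongr_apply, Prod.map]
       exact Prod.ext h1 h2)
    | (have h1 := LinearMap.congr_fun u.c24 x.1
       have h2 := LinearMap.congr_fun v.c24 x.2
       simp only [LinearMap.comp_apply, LinearEquiv.coe_coe] at h1 h2 ⊢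
       simp only [GridRep.dsum, LinearMap.prodMap_apply, LinearEquiv.prodCongr_apply, Prod.map]
       exact Prod.ext h1 h2)
    | (have h1 := LinearMap.congr_fun u.c34 x.1
       have h2 := LinearMap.congr_fun v.c34 x.2
       simp only [LinearMap.comp_apply, LinearEquiv.coe_coe] at h1 h2 ⊢
       simp only [GridRep.dsum, LinearMap.prodMap_apply, LinearEquiv.prodCongr_apply, Prod.map]
       exact Prod.ext h1 h2)

end Aux

section Part23

open Module Submodule

variable {V W AV BV AW BW : Type} [AddCommGroup V] [Module 𝕜 V] [AddCommGroup W] [Module 𝕜 W]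
  [AddCommGroup AV] [Module 𝕜 AV] [AddCommGroup BV] [Module 𝕜 BV]
  [AddCommGroup AW] [Module 𝕜 AW] [AddCommGroup BW] [Module 𝕜 BW]

/-! ### Pairwise non-isomorphism -/

lemma noIso1 {A B : GridRep 𝕜} (h : finrank 𝕜 A.V1 ≠ finrank 𝕜 B.V1) : IsEmpty (GridIso A B) :=
  ⟨fun e => h e.e1.finrank_eq⟩

lemma noIso2 {A B : GridRep 𝕜} (h : finrank 𝕜 A.V2 ≠ finrank 𝕜 B.V2) : IsEmpty (GridIso A B) :=
  ⟨fun e => h e.e2.finrank_eq⟩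

lemma noIso3 {A B : GridRep 𝕜} (h : finrank 𝕜 A.V3 ≠ finrank 𝕜 B.V3) : IsEmpty (GridIso A B) :=
  ⟨fun e => h e.e3.finrank_eq⟩

lemma noIso4 {A B : GridRep 𝕜} (h : finrank 𝕜 A.V4 ≠ finrank 𝕜 B.V4) : IsEmpty (GridIso A B) :=
  ⟨fun e => h e.e4.finrank_eq⟩

lemma noIsoM {a b c d a' b' c' d' : ℕ} {h : ∀ x : ℕ, x < a → x < d → (x < b ↔ x < c)}
    {h' : ∀ x : ℕ, x < a' → x < d' → (x < b' ↔ x < c')}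
    (hne : ¬ (a = a' ∧ b = b' ∧ c = c' ∧ d = d')) :
    IsEmpty (GridIso (M 𝕜 a b c d h) (M 𝕜 a' b' c' d' h')) := by
  constructor
  intro e
  apply hne
  have h1 : a = a' := by
    exact (Module.finrank_fin_fun 𝕜).symm.trans (e.e1.finrank_eq.trans (Module.finrank_fin_fun 𝕜))
  have h2 : b = b' := by
    exact (Module.finrank_fin_fun 𝕜).symm.trans (e.e2.finrank_eq.trans (Module.finrank_fin_fun 𝕜))
  have h3 : c = c' := by
    exact (Module.finrank_fin_fun 𝕜).symm.trans (e.e3.finrank_eq.trans (Module.finrank_fin_fun 𝕜))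
  have h4 : d = d' := by
    exact (Module.finrank_fin_fun 𝕜).symm.trans (e.e4.finrank_eq.trans (Module.finrank_fin_fun 𝕜))
  exact ⟨h1, h2, h3, h4⟩

lemma part3 : (elevenList 𝕜).Pairwise fun A B => IsEmpty (GridIso A B) := by
  rw [List.pairwise_iff_getElem]
  intro i j hi hj hij
  simp only [elevenList, List.length_cons, List.length_nil] at hi hj
  interval_cases i <;> interval_cases j <;>
    simp only [elevenList, List.getElem_cons_zero, List.getElem_cons_succ] <;>
    first
      | omega
      | exact noIsoM (by omega)

end Part23

section Part2

open Module Submodule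

variable {V W AV BV AW BW : Type} [AddCommGroup V] [Module 𝕜 V] [AddCommGroup W] [Module 𝕜 W]
  [AddCommGroup AV] [Module 𝕜 AV] [AddCommGroup BV] [Module 𝕜 BV]
  [AddCommGroup AW] [Module 𝕜 AW] [AddCommGroup BW] [Module 𝕜 BW]

/-- Conjugated projection onto the first factor. -/
def pmap (e : V ≃ₗ[𝕜] AV × BV) : V →ₗ[𝕜] V :=
  e.symm.toLinearMap ∘ₗ (LinearMap.inl 𝕜 AV BV ∘ₗ LinearMap.fst 𝕜 AV BV) ∘ₗ e.toLinearMap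

lemma pmap_apply (e : V ≃ₗ[𝕜] AV × BV) (v : V) : pmap e v = e.symm ((e v).1, 0) := rfl

lemma pmap_idem (e : V ≃ₗ[𝕜] AV × BV) : pmap e ∘ₗ pmap e = pmap e := by
  ext v
  simp [pmap_apply, LinearEquiv.apply_symm_apply]

lemma pmap_comm {e : V ≃ₗ[𝕜] AV × BV} {e' : W ≃ₗ[𝕜] AW × BW} {f : V →ₗ[𝕜] W}
    {fA : AV →ₗ[𝕜] AW} {fB : BV →ₗ[𝕜] BW}
    (h : e'.toLinearMap ∘ₗ f = (fA.prodMap fB) ∘ₗ e.toLinearMap) :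
    pmap e' ∘ₗ f = f ∘ₗ pmap e := by
  ext v
  have h1 := LinearMap.congr_fun h v
  have h2 := LinearMap.congr_fun h (pmap e v)
  simp only [LinearMap.comp_apply, LinearEquiv.coe_coe, LinearMap.prodMap_apply] at h1 h2 ⊢
  apply e'.injective
  rw [pmap_apply, LinearEquiv.apply_symm_apply, h1, h2]
  simp [pmap_apply, LinearEquiv.apply_symm_apply]

lemma subsingleton_left_of_pmap_zero (e : V ≃ₗ[𝕜] AV × BV) (h : pmap e = 0) :
    Subsingleton AV := by
  refine subsingleton_of_forall_eq 0 fun a => ?_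
  have := LinearMap.congr_fun h (e.symm (a, 0))
  rw [pmap_apply, LinearEquiv.apply_symm_apply] at this
  simp only [LinearMap.zero_apply] at this
  have h2 : ((a, 0) : AV × BV) = e (e.symm ((a,0) : AV × BV)) := (e.apply_symm_apply _).symm
  rw [show e.symm ((a,0) : AV × BV) = e.symm (((a,0) : AV × BV).1, 0) from rfl, this] at h2
  have h3 : (0:AV) = a := by simpa using (congrArg Prod.fst h2).symm
  exact h3.symm

lemma subsingleton_right_of_pmap_id (e : V ≃ₗ[𝕜] AV × BV) (h : pmap e = LinearMap.id) :
    Subsingleton BV := by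
  refine subsingleton_of_forall_eq 0 fun b => ?_
  have := LinearMap.congr_fun h (e.symm (0, b))
  rw [pmap_apply, LinearEquiv.apply_symm_apply] at this
  simp only [LinearMap.id_apply] at this
  have h2 := congrArg e this
  rw [LinearEquiv.apply_symm_apply, LinearEquiv.apply_symm_apply] at h2
  have h3 : (0:BV) = b := by simpa using congrArg Prod.snd h2
  exact h3.symm

lemma subsingleton_pair (e : V ≃ₗ[𝕜] AV × BV) (h : Subsingleton V) :
    Subsingleton AV ∧ Subsingleton BV := by
  haveI : Subsingleton (AV × BV) := e.symm.toEquiv.subsingleton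
  constructor
  · exact subsingleton_of_forall_eq 0 fun a => by
      simpa using congrArg Prod.fst (Subsingleton.elim ((a, (0:BV))) ((0,0)))
  · exact subsingleton_of_forall_eq 0 fun b => by
      simpa using congrArg Prod.snd (Subsingleton.elim (((0:AV), b)) ((0,0)))

lemma fin1_eq_smul (v : Fin 1 → 𝕜) : v = v 0 • (fun _ => (1:𝕜)) := by
  funext i
  rw [Subsingleton.elim i 0]
  simp

lemma endoFin1 (f : (Fin 1 → 𝕜) →ₗ[𝕜] (Fin 1 → 𝕜)) (h : f ∘ₗ f = f) :
    f = 0 ∨ f = LinearMap.id := by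
  set c : 𝕜 := f (fun _ => 1) 0 with hc
  have hf1 : f (fun _ => 1) = c • (fun _ => (1:𝕜)) := fin1_eq_smul _
  have hcc : c * c = c := by
    have := LinearMap.congr_fun h (fun _ => (1:𝕜))
    rw [LinearMap.comp_apply, hf1, map_smul, hf1, smul_smul] at this
    have := congrFun this 0
    simpa [smul_eq_mul] using this
  have hv : ∀ v : Fin 1 → 𝕜, f v = (v 0 * c) • (fun _ => (1:𝕜)) := by
    intro v
    conv_lhs => rw [fin1_eq_smul v]
    rw [map_smul, hf1, smul_smul]
  have : c = 0 ∨ c = 1 := by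
    rcases mul_eq_zero.mp (by ring_nf; linear_combination hcc : c * (c - 1) = 0) with h | h
    · exact Or.inl h
    · exact Or.inr (sub_eq_zero.mp h)
  rcases this with h0 | h1
  · left
    apply LinearMap.ext; intro v; funext i
    rw [hv v, h0]
    simp
  · right
    apply LinearMap.ext; intro v; funext i
    rw [hv v, h1, mul_one]
    exact (congrFun (fin1_eq_smul v) i).symm
  
lemma indMap_one_one : indMap 𝕜 1 1 = LinearMap.id := by
  apply LinearMap.ext; intro v; funext i
  simp only [indMap_apply, LinearMap.id_apply]
  rw [dif_pos i.isLt]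

lemma notSubsingletonFin1 : ¬ Subsingleton (Fin 1 → 𝕜) := by
  intro h
  have := congrFun (h.elim (fun _ => (1:𝕜)) (fun _ => 0)) 0
  simp at this

end Part2

section Part2b

lemma indec_1000 (h : ∀ x : ℕ, x < 1 → x < 0 → (x < 0 ↔ x < 0)) : (M 𝕜 1 0 0 0 h).Indec := by
  constructor
  · rintro ⟨hz1, hz2, hz3, hz4⟩
    exact notSubsingletonFin1 hz1
  · rintro A' B' ⟨e⟩
    rcases endoFin1 (pmap e.e1) (pmap_idem _) with h0 | h0
    · left
      exact ⟨subsingleton_left_of_pmap_zero e.e1 h0, (subsingleton_pair e.e2 (inferInstanceAs (Subsingleton (Fin 0 → 𝕜)))).1, (subsingleton_pair e.e3 (inferInstanceAs (Subsingleton (Fin 0 → 𝕜)))).1, (subsingleton_pair e.e4 (inferInstanceAs (Subsingleton (Fin 0 → 𝕜)))).1⟩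
    · right
      exact ⟨subsingleton_right_of_pmap_id e.e1 h0, (subsingleton_pair e.e2 (inferInstanceAs (Subsingleton (Fin 0 → 𝕜)))).2, (subsingleton_pair e.e3 (inferInstanceAs (Subsingleton (Fin 0 → 𝕜)))).2, (subsingleton_pair e.e4 (inferInstanceAs (Subsingleton (Fin 0 → 𝕜)))).2⟩

lemma indec_0100 (h : ∀ x : ℕ, x < 0 → x < 0 → (x < 1 ↔ x < 0)) : (M 𝕜 0 1 0 0 h).Indec := by
  constructor
  · rintro ⟨hz1, hz2, hz3, hz4⟩
    exact notSubsingletonFin1 hz2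
  · rintro A' B' ⟨e⟩
    rcases endoFin1 (pmap e.e2) (pmap_idem _) with h0 | h0
    · left
      exact ⟨(subsingleton_pair e.e1 (inferInstanceAs (Subsingleton (Fin 0 → 𝕜)))).1, subsingleton_left_of_pmap_zero e.e2 h0, (subsingleton_pair e.e3 (inferInstanceAs (Subsingleton (Fin 0 → 𝕜)))).1, (subsingleton_pair e.e4 (inferInstanceAs (Subsingleton (Fin 0 → 𝕜)))).1⟩
    · right
      exact ⟨(subsingleton_pair e.e1 (inferInstanceAs (Subsingleton (Fin 0 → 𝕜)))).2, subsingleton_right_of_pmap_id e.e2 h0, (subsingleton_pair e.e3 (inferInstanceAs (Subsingleton (Fin 0 → 𝕜)))).2, (subsingleton_pair e.e4 (inferInstanceAs (Subsingleton (Fin 0 → 𝕜)))).2⟩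

lemma indec_0010 (h : ∀ x : ℕ, x < 0 → x < 0 → (x < 0 ↔ x < 1)) : (M 𝕜 0 0 1 0 h).Indec := by
  constructor
  · rintro ⟨hz1, hz2, hz3, hz4⟩
    exact notSubsingletonFin1 hz3
  · rintro A' B' ⟨e⟩
    rcases endoFin1 (pmap e.e3) (pmap_idem _) with h0 | h0
    · left
      exact ⟨(subsingleton_pair e.e1 (inferInstanceAs (Subsingleton (Fin 0 → 𝕜)))).1, (subsingleton_pair e.e2 (inferInstanceAs (Subsingleton (Fin 0 → 𝕜)))).1, subsingleton_left_of_pmap_zero e.e3 h0, (subsingleton_pair e.e4 (inferInstanceAs (Subsingleton (Fin 0 → 𝕜)))).1⟩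
    · right
      exact ⟨(subsingleton_pair e.e1 (inferInstanceAs (Subsingleton (Fin 0 → 𝕜)))).2, (subsingleton_pair e.e2 (inferInstanceAs (Subsingleton (Fin 0 → 𝕜)))).2, subsingleton_right_of_pmap_id e.e3 h0, (subsingleton_pair e.e4 (inferInstanceAs (Subsingleton (Fin 0 → 𝕜)))).2⟩

lemma indec_0001 (h : ∀ x : ℕ, x < 0 → x < 1 → (x < 0 ↔ x < 0)) : (M 𝕜 0 0 0 1 h).Indec := by
  constructor
  · rintro ⟨hz1, hz2, hz3, hz4⟩
    exact notSubsingletonFin1 hz4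
  · rintro A' B' ⟨e⟩
    rcases endoFin1 (pmap e.e4) (pmap_idem _) with h0 | h0
    · left
      exact ⟨(subsingleton_pair e.e1 (inferInstanceAs (Subsingleton (Fin 0 → 𝕜)))).1, (subsingleton_pair e.e2 (inferInstanceAs (Subsingleton (Fin 0 → 𝕜)))).1, (subsingleton_pair e.e3 (inferInstanceAs (Subsingleton (Fin 0 → 𝕜)))).1, subsingleton_left_of_pmap_zero e.e4 h0⟩
    · right
      exact ⟨(subsingleton_pair e.e1 (inferInstanceAs (Subsingleton (Fin 0 → 𝕜)))).2, (subsingleton_pair e.e2 (inferInstanceAs (Subsingleton (Fin 0 → 𝕜)))).2, (subsingleton_pair e.e3 (inferInstanceAs (Subsingleton (Fin 0 → 𝕜)))).2, subsingleton_right_of_pmap_id e.e4 h0⟩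

lemma indec_1100 (h : ∀ x : ℕ, x < 1 → x < 0 → (x < 1 ↔ x < 0)) : (M 𝕜 1 1 0 0 h).Indec := by
  constructor
  · rintro ⟨hz1, hz2, hz3, hz4⟩
    exact notSubsingletonFin1 hz1
  · rintro A' B' ⟨e⟩
    have h12 : pmap e.e2 = pmap e.e1 := by
      have hq : pmap e.e2 ∘ₗ indMap 𝕜 1 1 = indMap 𝕜 1 1 ∘ₗ pmap e.e1 := pmap_comm e.c12
      rw [indMap_one_one] at hq; exact LinearMap.ext fun v => LinearMap.congr_fun hq v
    rcases endoFin1 (pmap e.e1) (pmap_idem _) with h0 | h0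
    · left
      exact ⟨subsingleton_left_of_pmap_zero e.e1 h0, subsingleton_left_of_pmap_zero e.e2 (h12.trans h0), (subsingleton_pair e.e3 (inferInstanceAs (Subsingleton (Fin 0 → 𝕜)))).1, (subsingleton_pair e.e4 (inferInstanceAs (Subsingleton (Fin 0 → 𝕜)))).1⟩
    · right
      exact ⟨subsingleton_right_of_pmap_id e.e1 h0, subsingleton_right_of_pmap_id e.e2 (h12.trans h0), (subsingleton_pair e.e3 (inferInstanceAs (Subsingleton (Fin 0 → 𝕜)))).2, (subsingleton_pair e.e4 (inferInstanceAs (Subsingleton (Fin 0 → 𝕜)))).2⟩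

lemma indec_1010 (h : ∀ x : ℕ, x < 1 → x < 0 → (x < 0 ↔ x < 1)) : (M 𝕜 1 0 1 0 h).Indec := by
  constructor
  · rintro ⟨hz1, hz2, hz3, hz4⟩
    exact notSubsingletonFin1 hz1
  · rintro A' B' ⟨e⟩
    have h13 : pmap e.e3 = pmap e.e1 := by
      have hq : pmap e.e3 ∘ₗ indMap 𝕜 1 1 = indMap 𝕜 1 1 ∘ₗ pmap e.e1 := pmap_comm e.c13
      rw [indMap_one_one] at hq; exact LinearMap.ext fun v => LinearMap.congr_fun hq v
    rcases endoFin1 (pmap e.e1) (pmap_idem _) with h0 | h0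
    · left
      exact ⟨subsingleton_left_of_pmap_zero e.e1 h0, (subsingleton_pair e.e2 (inferInstanceAs (Subsingleton (Fin 0 → 𝕜)))).1, subsingleton_left_of_pmap_zero e.e3 (h13.trans h0), (subsingleton_pair e.e4 (inferInstanceAs (Subsingleton (Fin 0 → 𝕜)))).1⟩
    · right
      exact ⟨subsingleton_right_of_pmap_id e.e1 h0, (subsingleton_pair e.e2 (inferInstanceAs (Subsingleton (Fin 0 → 𝕜)))).2, subsingleton_right_of_pmap_id e.e3 (h13.trans h0), (subsingleton_pair e.e4 (inferInstanceAs (Subsingleton (Fin 0 → 𝕜)))).2⟩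

lemma indec_0101 (h : ∀ x : ℕ, x < 0 → x < 1 → (x < 1 ↔ x < 0)) : (M 𝕜 0 1 0 1 h).Indec := by
  constructor
  · rintro ⟨hz1, hz2, hz3, hz4⟩
    exact notSubsingletonFin1 hz2
  · rintro A' B' ⟨e⟩
    have h24 : pmap e.e4 = pmap e.e2 := by
      have hq : pmap e.e4 ∘ₗ indMap 𝕜 1 1 = indMap 𝕜 1 1 ∘ₗ pmap e.e2 := pmap_comm e.c24
      rw [indMap_one_one] at hq; exact LinearMap.ext fun v => LinearMap.congr_fun hq v
    rcases endoFin1 (pmap e.e2) (pmap_idem _) with h0 | h0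
    · left
      exact ⟨(subsingleton_pair e.e1 (inferInstanceAs (Subsingleton (Fin 0 → 𝕜)))).1, subsingleton_left_of_pmap_zero e.e2 h0, (subsingleton_pair e.e3 (inferInstanceAs (Subsingleton (Fin 0 → 𝕜)))).1, subsingleton_left_of_pmap_zero e.e4 (h24.trans h0)⟩
    · right
      exact ⟨(subsingleton_pair e.e1 (inferInstanceAs (Subsingleton (Fin 0 → 𝕜)))).2, subsingleton_right_of_pmap_id e.e2 h0, (subsingleton_pair e.e3 (inferInstanceAs (Subsingleton (Fin 0 → 𝕜)))).2, subsingleton_right_of_pmap_id e.e4 (h24.trans h0)⟩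

lemma indec_0011 (h : ∀ x : ℕ, x < 0 → x < 1 → (x < 0 ↔ x < 1)) : (M 𝕜 0 0 1 1 h).Indec := by
  constructor
  · rintro ⟨hz1, hz2, hz3, hz4⟩
    exact notSubsingletonFin1 hz3
  · rintro A' B' ⟨e⟩
    have h34 : pmap e.e4 = pmap e.e3 := by
      have hq : pmap e.e4 ∘ₗ indMap 𝕜 1 1 = indMap 𝕜 1 1 ∘ₗ pmap e.e3 := pmap_comm e.c34
      rw [indMap_one_one] at hq; exact LinearMap.ext fun v => LinearMap.congr_fun hq v
    rcases endoFin1 (pmap e.e3) (pmap_idem _) with h0 | h0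
    · left
      exact ⟨(subsingleton_pair e.e1 (inferInstanceAs (Subsingleton (Fin 0 → 𝕜)))).1, (subsingleton_pair e.e2 (inferInstanceAs (Subsingleton (Fin 0 → 𝕜)))).1, subsingleton_left_of_pmap_zero e.e3 h0, subsingleton_left_of_pmap_zero e.e4 (h34.trans h0)⟩
    · right
      exact ⟨(subsingleton_pair e.e1 (inferInstanceAs (Subsingleton (Fin 0 → 𝕜)))).2, (subsingleton_pair e.e2 (inferInstanceAs (Subsingleton (Fin 0 → 𝕜)))).2, subsingleton_right_of_pmap_id e.e3 h0, subsingleton_right_of_pmap_id e.e4 (h34.trans h0)⟩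

lemma indec_1110 (h : ∀ x : ℕ, x < 1 → x < 0 → (x < 1 ↔ x < 1)) : (M 𝕜 1 1 1 0 h).Indec := by
  constructor
  · rintro ⟨hz1, hz2, hz3, hz4⟩
    exact notSubsingletonFin1 hz1
  · rintro A' B' ⟨e⟩
    have h12 : pmap e.e2 = pmap e.e1 := by
      have hq : pmap e.e2 ∘ₗ indMap 𝕜 1 1 = indMap 𝕜 1 1 ∘ₗ pmap e.e1 := pmap_comm e.c12
      rw [indMap_one_one] at hq; exact LinearMap.ext fun v => LinearMap.congr_fun hq v
    have h13 : pmap e.e3 = pmap e.e1 := by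
      have hq : pmap e.e3 ∘ₗ indMap 𝕜 1 1 = indMap 𝕜 1 1 ∘ₗ pmap e.e1 := pmap_comm e.c13
      rw [indMap_one_one] at hq; exact LinearMap.ext fun v => LinearMap.congr_fun hq v
    rcases endoFin1 (pmap e.e1) (pmap_idem _) with h0 | h0
    · left
      exact ⟨subsingleton_left_of_pmap_zero e.e1 h0, subsingleton_left_of_pmap_zero e.e2 (h12.trans h0), subsingleton_left_of_pmap_zero e.e3 (h13.trans h0), (subsingleton_pair e.e4 (inferInstanceAs (Subsingleton (Fin 0 → 𝕜)))).1⟩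
    · right
      exact ⟨subsingleton_right_of_pmap_id e.e1 h0, subsingleton_right_of_pmap_id e.e2 (h12.trans h0), subsingleton_right_of_pmap_id e.e3 (h13.trans h0), (subsingleton_pair e.e4 (inferInstanceAs (Subsingleton (Fin 0 → 𝕜)))).2⟩

lemma indec_0111 (h : ∀ x : ℕ, x < 0 → x < 1 → (x < 1 ↔ x < 1)) : (M 𝕜 0 1 1 1 h).Indec := by
  constructor
  · rintro ⟨hz1, hz2, hz3, hz4⟩
    exact notSubsingletonFin1 hz2
  · rintro A' B' ⟨e⟩
    have h24 : pmap e.e4 = pmap e.e2 := by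
      have hq : pmap e.e4 ∘ₗ indMap 𝕜 1 1 = indMap 𝕜 1 1 ∘ₗ pmap e.e2 := pmap_comm e.c24
      rw [indMap_one_one] at hq; exact LinearMap.ext fun v => LinearMap.congr_fun hq v
    have h34 : pmap e.e4 = pmap e.e3 := by
      have hq : pmap e.e4 ∘ₗ indMap 𝕜 1 1 = indMap 𝕜 1 1 ∘ₗ pmap e.e3 := pmap_comm e.c34
      rw [indMap_one_one] at hq; exact LinearMap.ext fun v => LinearMap.congr_fun hq v
    rcases endoFin1 (pmap e.e2) (pmap_idem _) with h0 | h0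
    · left
      exact ⟨(subsingleton_pair e.e1 (inferInstanceAs (Subsingleton (Fin 0 → 𝕜)))).1, subsingleton_left_of_pmap_zero e.e2 h0, subsingleton_left_of_pmap_zero e.e3 ((h34.symm.trans h24).trans h0), subsingleton_left_of_pmap_zero e.e4 (h24.trans h0)⟩
    · right
      exact ⟨(subsingleton_pair e.e1 (inferInstanceAs (Subsingleton (Fin 0 → 𝕜)))).2, subsingleton_right_of_pmap_id e.e2 h0, subsingleton_right_of_pmap_id e.e3 ((h34.symm.trans h24).trans h0), subsingleton_right_of_pmap_id e.e4 (h24.trans h0)⟩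

lemma indec_1111 (h : ∀ x : ℕ, x < 1 → x < 1 → (x < 1 ↔ x < 1)) : (M 𝕜 1 1 1 1 h).Indec := by
  constructor
  · rintro ⟨hz1, hz2, hz3, hz4⟩
    exact notSubsingletonFin1 hz1
  · rintro A' B' ⟨e⟩
    have h12 : pmap e.e2 = pmap e.e1 := by
      have hq : pmap e.e2 ∘ₗ indMap 𝕜 1 1 = indMap 𝕜 1 1 ∘ₗ pmap e.e1 := pmap_comm e.c12
      rw [indMap_one_one] at hq; exact LinearMap.ext fun v => LinearMap.congr_fun hq v
    have h13 : pmap e.e3 = pmap e.e1 := by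
      have hq : pmap e.e3 ∘ₗ indMap 𝕜 1 1 = indMap 𝕜 1 1 ∘ₗ pmap e.e1 := pmap_comm e.c13
      rw [indMap_one_one] at hq; exact LinearMap.ext fun v => LinearMap.congr_fun hq v
    have h24 : pmap e.e4 = pmap e.e2 := by
      have hq : pmap e.e4 ∘ₗ indMap 𝕜 1 1 = indMap 𝕜 1 1 ∘ₗ pmap e.e2 := pmap_comm e.c24
      rw [indMap_one_one] at hq; exact LinearMap.ext fun v => LinearMap.congr_fun hq v
    have h34 : pmap e.e4 = pmap e.e3 := by
      have hq : pmap e.e4 ∘ₗ indMap 𝕜 1 1 = indMap 𝕜 1 1 ∘ₗ pmap e.e3 := pmap_comm e.c34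
      rw [indMap_one_one] at hq; exact LinearMap.ext fun v => LinearMap.congr_fun hq v
    rcases endoFin1 (pmap e.e1) (pmap_idem _) with h0 | h0
    · left
      exact ⟨subsingleton_left_of_pmap_zero e.e1 h0, subsingleton_left_of_pmap_zero e.e2 (h12.trans h0), subsingleton_left_of_pmap_zero e.e3 (h13.trans h0), subsingleton_left_of_pmap_zero e.e4 ((h24.trans h12).trans h0)⟩
    · right
      exact ⟨subsingleton_right_of_pmap_id e.e1 h0, subsingleton_right_of_pmap_id e.e2 (h12.trans h0), subsingleton_right_of_pmap_id e.e3 (h13.trans h0), subsingleton_right_of_pmap_id e.e4 ((h24.trans h12).trans h0)⟩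

lemma part2 : ∀ N ∈ elevenList 𝕜, N.Indec := by
  intro N hN
  simp only [elevenList, List.mem_cons, List.not_mem_nil, or_false] at hN
  rcases hN with rfl|rfl|rfl|rfl|rfl|rfl|rfl|rfl|rfl|rfl|rfl
  exacts [indec_1000 _, indec_0100 _, indec_0010 _, indec_0001 _, indec_1100 _, indec_1010 _, indec_0101 _, indec_0011 _, indec_1110 _, indec_0111 _, indec_1111 _]

end Part2b

section Part1

open Module Submodule

variable {V V' : Type} [AddCommGroup V] [Module 𝕜 V] [AddCommGroup V'] [Module 𝕜 V']

/-! ### restriction of a representation to invariant subspaces -/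

def resRep (R : GridRep 𝕜) (W1 : Submodule 𝕜 R.V1) (W2 : Submodule 𝕜 R.V2)
    (W3 : Submodule 𝕜 R.V3) (W4 : Submodule 𝕜 R.V4)
    (h12 : ∀ x ∈ W1, R.f12 x ∈ W2) (h13 : ∀ x ∈ W1, R.f13 x ∈ W3)
    (h24 : ∀ x ∈ W2, R.f24 x ∈ W4) (h34 : ∀ x ∈ W3, R.f34 x ∈ W4) : GridRep 𝕜 where
  V1 := W1
  V2 := W2
  V3 := W3
  V4 := W4
  f12 := R.f12.restrict h12
  f13 := R.f13.restrict h13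
  f24 := R.f24.restrict h24
  f34 := R.f34.restrict h34
  comm := by
    apply LinearMap.ext; intro v
    apply Subtype.ext
    simp only [LinearMap.comp_apply, LinearMap.restrict_coe_apply]
    exact LinearMap.congr_fun R.comm v.1

lemma splitSquare (f : V →ₗ[𝕜] V') {U W : Submodule 𝕜 V} {U' W' : Submodule 𝕜 V'}
    (hc : IsCompl U W) (hc' : IsCompl U' W')
    (hU : ∀ x ∈ U, f x ∈ U') (hW : ∀ x ∈ W, f x ∈ W') :
    (prodEquivOfIsCompl U' W' hc').symm.toLinearMap ∘ₗ f
      = ((f.restrict hU).prodMap (f.restrict hW)) ∘ₗ (prodEquivOfIsCompl U W hc).symm.toLinearMap := by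
  apply LinearMap.ext; intro v
  apply (prodEquivOfIsCompl U' W' hc').injective
  simp only [LinearMap.comp_apply, LinearEquiv.coe_coe, LinearEquiv.apply_symm_apply]
  set p := (prodEquivOfIsCompl U W hc).symm v with hp
  have hv : (p.1 : V) + (p.2 : V) = v := by
    have := coe_prodEquivOfIsCompl' U W hc p
    rw [hp, LinearEquiv.apply_symm_apply] at this
    exact this.symm
  rw [coe_prodEquivOfIsCompl']
  simp only [LinearMap.prodMap_apply, LinearMap.restrict_coe_apply]
  rw [← map_add, hv]

noncomputable def splitIso (R : GridRep 𝕜)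
    {U1 W1 : Submodule 𝕜 R.V1} {U2 W2 : Submodule 𝕜 R.V2}
    {U3 W3 : Submodule 𝕜 R.V3} {U4 W4 : Submodule 𝕜 R.V4}
    (hc1 : IsCompl U1 W1) (hc2 : IsCompl U2 W2) (hc3 : IsCompl U3 W3) (hc4 : IsCompl U4 W4)
    (hU12 : ∀ x ∈ U1, R.f12 x ∈ U2) (hU13 : ∀ x ∈ U1, R.f13 x ∈ U3)
    (hU24 : ∀ x ∈ U2, R.f24 x ∈ U4) (hU34 : ∀ x ∈ U3, R.f34 x ∈ U4)
    (hW12 : ∀ x ∈ W1, R.f12 x ∈ W2) (hW13 : ∀ x ∈ W1, R.f13 x ∈ W3)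
    (hW24 : ∀ x ∈ W2, R.f24 x ∈ W4) (hW34 : ∀ x ∈ W3, R.f34 x ∈ W4) :
    GridIso R ((resRep R U1 U2 U3 U4 hU12 hU13 hU24 hU34).dsum
      (resRep R W1 W2 W3 W4 hW12 hW13 hW24 hW34)) :=
  ⟨(prodEquivOfIsCompl U1 W1 hc1).symm, (prodEquivOfIsCompl U2 W2 hc2).symm,
   (prodEquivOfIsCompl U3 W3 hc3).symm, (prodEquivOfIsCompl U4 W4 hc4).symm,
   splitSquare R.f12 hc1 hc2 hU12 hW12, splitSquare R.f13 hc1 hc3 hU13 hW13,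
   splitSquare R.f24 hc2 hc4 hU24 hW24, splitSquare R.f34 hc3 hc4 hU34 hW34⟩

/-! ### complements -/

lemma isCompl_span_zero_top : IsCompl (span 𝕜 ({0} : Set V)) (⊤ : Submodule 𝕜 V) := by
  rw [Submodule.span_zero_singleton]
  exact isCompl_bot_top

lemma compl_avoid (U : Submodule 𝕜 V) (x : V) (hx : x ∉ U) :
    ∃ W, U ≤ W ∧ IsCompl (span 𝕜 {x}) W := by
  obtain ⟨C, hC⟩ := Submodule.exists_isCompl (span 𝕜 {x} ⊔ U)
  refine ⟨U ⊔ C, le_sup_left, ?_, ?_⟩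
  · rw [disjoint_def]
    intro v hv hvUC
    obtain ⟨u, hu, w, hw, rfl⟩ := Submodule.mem_sup.mp hvUC
    have hw' : w ∈ (span 𝕜 {x} ⊔ U) := by
      have h1 : u + w ∈ span 𝕜 {x} ⊔ U := le_sup_left (α := Submodule 𝕜 V) hv
      have h2 : u ∈ span 𝕜 {x} ⊔ U := le_sup_right (α := Submodule 𝕜 V) hu
      have := sub_mem h1 h2
      simpa using this
    have hw0 : w = 0 := disjoint_def.mp hC.disjoint w hw' hw
    subst hw0
    rw [add_zero] at hv ⊢
    obtain ⟨c, hc⟩ := mem_span_singleton.mp hv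
    rcases eq_or_ne c 0 with h0 | h0
    · rw [← hc, h0, zero_smul]
    · exfalso
      apply hx
      have : x = c⁻¹ • u := by
        rw [← hc, smul_smul, inv_mul_cancel₀ h0, one_smul]
      rw [this]
      exact smul_mem _ _ hu
  · rw [codisjoint_iff, ← sup_assoc]
    exact codisjoint_iff.mp hC.codisjoint

lemma compl_preimage (f : V →ₗ[𝕜] V') (x : V) (y : V') (hfx : f x = y) (hy : y ≠ 0)
    {W' : Submodule 𝕜 V'} (hc : IsCompl (span 𝕜 {y}) W') :
    IsCompl (span 𝕜 {x}) (W'.comap f) := by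
  constructor
  · rw [disjoint_def]
    intro v hv hv'
    obtain ⟨c, rfl⟩ := mem_span_singleton.mp hv
    have hcy : c • y ∈ W' := by
      rw [← hfx, ← map_smul]
      exact hv'
    rcases eq_or_ne c 0 with h0 | h0
    · rw [h0, zero_smul]
    · exfalso
      apply hy
      have hyW : y ∈ W' := by
        have := W'.smul_mem c⁻¹ hcy
        rwa [smul_smul, inv_mul_cancel₀ h0, one_smul] at this
      exact disjoint_def.mp hc.disjoint y (mem_span_singleton_self y) hyW
  · rw [codisjoint_iff, eq_top_iff]
    intro v _
    have hfv : f v ∈ span 𝕜 {y} ⊔ W' := by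
      rw [codisjoint_iff.mp hc.codisjoint]
      trivial
    obtain ⟨u, hu, w, hw, huw⟩ := Submodule.mem_sup.mp hfv
    obtain ⟨c, rfl⟩ := mem_span_singleton.mp hu
    refine Submodule.mem_sup.mpr ⟨c • x, smul_mem _ _ (mem_span_singleton_self x),
      v - c • x, ?_, by abel⟩
    show f (v - c • x) ∈ W'
    rw [map_sub, map_smul, hfx]
    have : f v - c • y = w := by rw [← huw]; abel
    rw [this]
    exact hw

lemma not_mem_of_isCompl {x : V} {W : Submodule 𝕜 V}
    (hc : IsCompl (span 𝕜 {x}) W) (hx : x ≠ 0) : x ∉ W :=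
  fun h => hx (disjoint_def.mp hc.disjoint x (mem_span_singleton_self x) h)

lemma finrank_span_eq {x : V} {ν : ℕ} (hx : (ν = 0 ∧ x = 0) ∨ (ν = 1 ∧ x ≠ 0)) :
    finrank 𝕜 (span 𝕜 {x}) = ν := by
  rcases hx with ⟨hν, hx⟩ | ⟨hν, hx⟩
  · subst hν; subst hx
    rw [Submodule.span_zero_singleton]
    exact finrank_bot 𝕜 V
  · subst hν
    exact finrank_span_singleton hx

lemma finrank_compl [FiniteDimensional 𝕜 V] {x : V} {W : Submodule 𝕜 V} {ν : ℕ}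
    (hx : (ν = 0 ∧ x = 0) ∨ (ν = 1 ∧ x ≠ 0)) (hc : IsCompl (span 𝕜 {x}) W) :
    finrank 𝕜 W + ν = finrank 𝕜 V := by
  have := Submodule.finrank_add_eq_of_isCompl hc
  rw [finrank_span_eq hx] at this
  omega

/-! ### identification of thin representations with indicator modules -/

lemma subsingletonSpanZero : Subsingleton (span 𝕜 ({0} : Set V)) := by
  refine subsingleton_of_forall_eq 0 fun y => Subtype.ext ?_
  have := y.2
  simp only [Submodule.mem_span_singleton] at this
  obtain ⟨c, hc⟩ := this
  simp only [smul_zero] at hc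
  simpa using hc.symm

noncomputable def eSpan1 (x : V) (hx : x ≠ 0) : (span 𝕜 {x}) ≃ₗ[𝕜] (Fin 1 → 𝕜) :=
  (LinearEquiv.toSpanNonzeroSingleton 𝕜 V x hx).symm.trans
    (LinearEquiv.funUnique (Fin 1) 𝕜 𝕜).symm

lemma eSpan1_apply (x : V) (hx : x ≠ 0) (c : 𝕜) (hm : c • x ∈ span 𝕜 {x}) :
    eSpan1 x hx ⟨c • x, hm⟩ = fun _ => c := by
  have h1 : (LinearEquiv.toSpanNonzeroSingleton 𝕜 V x hx).symm ⟨c • x, hm⟩ = c := by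
    apply (LinearEquiv.toSpanNonzeroSingleton 𝕜 V x hx).injective
    rw [LinearEquiv.apply_symm_apply]
    apply Subtype.ext
    simp
  rw [eSpan1, LinearEquiv.trans_apply, h1]
  rfl

noncomputable def eVert : ∀ (ν : ℕ) (x : V), ((ν = 0 ∧ x = 0) ∨ (ν = 1 ∧ x ≠ 0)) →
    ((span 𝕜 {x}) ≃ₗ[𝕜] (Fin ν → 𝕜))
  | 0, x, h => by
      have hx : x = 0 := by
        rcases h with ⟨_, h⟩ | ⟨h, _⟩
        · exact h
        · exact absurd h (by omega)
      subst hx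
      haveI : Subsingleton (span 𝕜 ({0} : Set V)) := subsingletonSpanZero
      exact LinearEquiv.ofSubsingleton _ _
  | 1, x, h => eSpan1 x (by
      rcases h with ⟨h, _⟩ | ⟨_, h⟩
      · exact absurd h one_ne_zero
      · exact h)
  | (n+2), x, h => absurd h (by omega)

lemma spanMapLe (f : V →ₗ[𝕜] V') (x : V) (y : V') (h : f x = y ∨ x = 0) :
    ∀ v ∈ span 𝕜 {x}, f v ∈ span 𝕜 {y} := by
  intro v hv
  obtain ⟨c, rfl⟩ := mem_span_singleton.mp hv
  rcases h with h | h
  · rw [map_smul, h]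
    exact smul_mem _ _ (mem_span_singleton_self y)
  · subst h
    simp

lemma thinSquare (f : V →ₗ[𝕜] V') {ν ν' : ℕ} {x : V} {y : V'}
    (hx : (ν = 0 ∧ x = 0) ∨ (ν = 1 ∧ x ≠ 0)) (hy : (ν' = 0 ∧ y = 0) ∨ (ν' = 1 ∧ y ≠ 0))
    (hf : f x = y ∨ x = 0) (hmap : ∀ v ∈ span 𝕜 {x}, f v ∈ span 𝕜 {y}) :
    (eVert ν' y hy).toLinearMap ∘ₗ (f.restrict hmap)
      = indMap 𝕜 ν ν' ∘ₗ (eVert ν x hx).toLinearMap := by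
  rcases hx with ⟨hν, hx0⟩ | ⟨hν, hx0⟩
  · subst hν; subst hx0
    haveI : Subsingleton (span 𝕜 ({0} : Set V)) := subsingletonSpanZero
    exact extDom _ _
  · subst hν
    rcases hy with ⟨hν', hy0⟩ | ⟨hν', hy0⟩
    · subst hν'
      exact extCod _ _
    · subst hν'
      have hfx : f x = y := hf.resolve_right hx0
      apply LinearMap.ext
      rintro ⟨v, hv⟩
      obtain ⟨c, rfl⟩ := mem_span_singleton.mp hv
      simp only [LinearMap.comp_apply, LinearEquiv.coe_coe]
      have h2 : (f.restrict hmap) ⟨c • x, hv⟩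
          = ⟨c • y, smul_mem _ _ (mem_span_singleton_self y)⟩ := by
        apply Subtype.ext
        rw [LinearMap.restrict_coe_apply]
        simp [hfx]
      rw [h2]
      show eSpan1 y hy0 _ = indMap 𝕜 1 1 (eSpan1 x hx0 _)
      rw [eSpan1_apply, eSpan1_apply]
      funext i
      simp

noncomputable def thinIso (R : GridRep 𝕜) {ν1 ν2 ν3 ν4 : ℕ}
    (hM : ∀ x : ℕ, x < ν1 → x < ν4 → (x < ν2 ↔ x < ν3))
    {x1 : R.V1} {x2 : R.V2} {x3 : R.V3} {x4 : R.V4}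
    (hx1 : (ν1 = 0 ∧ x1 = 0) ∨ (ν1 = 1 ∧ x1 ≠ 0)) (hx2 : (ν2 = 0 ∧ x2 = 0) ∨ (ν2 = 1 ∧ x2 ≠ 0))
    (hx3 : (ν3 = 0 ∧ x3 = 0) ∨ (ν3 = 1 ∧ x3 ≠ 0)) (hx4 : (ν4 = 0 ∧ x4 = 0) ∨ (ν4 = 1 ∧ x4 ≠ 0))
    (h12 : R.f12 x1 = x2 ∨ x1 = 0) (h13 : R.f13 x1 = x3 ∨ x1 = 0)
    (h24 : R.f24 x2 = x4 ∨ x2 = 0) (h34 : R.f34 x3 = x4 ∨ x3 = 0) :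
    GridIso (resRep R (span 𝕜 {x1}) (span 𝕜 {x2}) (span 𝕜 {x3}) (span 𝕜 {x4})
        (spanMapLe R.f12 x1 x2 h12) (spanMapLe R.f13 x1 x3 h13)
        (spanMapLe R.f24 x2 x4 h24) (spanMapLe R.f34 x3 x4 h34))
      (M 𝕜 ν1 ν2 ν3 ν4 hM) :=
  ⟨eVert ν1 x1 hx1, eVert ν2 x2 hx2, eVert ν3 x3 hx3, eVert ν4 x4 hx4,
   thinSquare R.f12 hx1 hx2 h12 (spanMapLe R.f12 x1 x2 h12),
   thinSquare R.f13 hx1 hx3 h13 (spanMapLe R.f13 x1 x3 h13),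
   thinSquare R.f24 hx2 hx4 h24 (spanMapLe R.f24 x2 x4 h24),
   thinSquare R.f34 hx3 hx4 h34 (spanMapLe R.f34 x3 x4 h34)⟩


noncomputable def totDim (R : GridRep 𝕜) : ℕ :=
  finrank 𝕜 R.V1 + finrank 𝕜 R.V2 + finrank 𝕜 R.V3 + finrank 𝕜 R.V4

/-! ### peeling off a thin summand -/

lemma peelCase (R : GridRep 𝕜) (ν1 ν2 ν3 ν4 : ℕ)
    (hM : ∀ x : ℕ, x < ν1 → x < ν4 → (x < ν2 ↔ x < ν3))
    (x1 : R.V1) (x2 : R.V2) (x3 : R.V3) (x4 : R.V4)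
    (hx1 : (ν1 = 0 ∧ x1 = 0) ∨ (ν1 = 1 ∧ x1 ≠ 0)) (hx2 : (ν2 = 0 ∧ x2 = 0) ∨ (ν2 = 1 ∧ x2 ≠ 0))
    (hx3 : (ν3 = 0 ∧ x3 = 0) ∨ (ν3 = 1 ∧ x3 ≠ 0)) (hx4 : (ν4 = 0 ∧ x4 = 0) ∨ (ν4 = 1 ∧ x4 ≠ 0))
    (h12 : R.f12 x1 = x2 ∨ x1 = 0) (h13 : R.f13 x1 = x3 ∨ x1 = 0)
    (h24 : R.f24 x2 = x4 ∨ x2 = 0) (h34 : R.f34 x3 = x4 ∨ x3 = 0)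
    (W1 : Submodule 𝕜 R.V1) (W2 : Submodule 𝕜 R.V2)
    (W3 : Submodule 𝕜 R.V3) (W4 : Submodule 𝕜 R.V4)
    (hc1 : IsCompl (span 𝕜 {x1}) W1) (hc2 : IsCompl (span 𝕜 {x2}) W2)
    (hc3 : IsCompl (span 𝕜 {x3}) W3) (hc4 : IsCompl (span 𝕜 {x4}) W4)
    (hW12 : ∀ v ∈ W1, R.f12 v ∈ W2) (hW13 : ∀ v ∈ W1, R.f13 v ∈ W3)
    (hW24 : ∀ v ∈ W2, R.f24 v ∈ W4) (hW34 : ∀ v ∈ W3, R.f34 v ∈ W4) :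
    Nonempty (GridIso R ((M 𝕜 ν1 ν2 ν3 ν4 hM).dsum (resRep R W1 W2 W3 W4 hW12 hW13 hW24 hW34)))
    ∧ totDim (resRep R W1 W2 W3 W4 hW12 hW13 hW24 hW34) + (ν1 + ν2 + ν3 + ν4) = totDim R := by
  constructor
  · exact ⟨isoTrans
      (splitIso R hc1 hc2 hc3 hc4 (spanMapLe R.f12 x1 x2 h12) (spanMapLe R.f13 x1 x3 h13)
        (spanMapLe R.f24 x2 x4 h24) (spanMapLe R.f34 x3 x4 h34) hW12 hW13 hW24 hW34)
      (isoDsumCongr (thinIso R hM hx1 hx2 hx3 hx4 h12 h13 h24 h34) (isoRefl _))⟩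
  · have d1 := finrank_compl hx1 hc1
    have d2 := finrank_compl hx2 hc2
    have d3 := finrank_compl hx3 hc3
    have d4 := finrank_compl hx4 hc4
    show finrank 𝕜 W1 + finrank 𝕜 W2 + finrank 𝕜 W3 + finrank 𝕜 W4 + (ν1 + ν2 + ν3 + ν4)
      = finrank 𝕜 R.V1 + finrank 𝕜 R.V2 + finrank 𝕜 R.V3 + finrank 𝕜 R.V4
    omega

/-! ### zero representations and lists -/

def dsumList : List (GridRep 𝕜) → GridRep 𝕜
  | [] => M 𝕜 0 0 0 0 (fun _ hx _ => absurd hx (by omega))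
  | (a :: l) => a.dsum (dsumList l)

lemma M0_isZero (h : ∀ x : ℕ, x < 0 → x < 0 → (x < 0 ↔ x < 0)) : (M 𝕜 0 0 0 0 h).IsZero :=
  ⟨inferInstanceAs (Subsingleton (Fin 0 → 𝕜)), inferInstanceAs (Subsingleton (Fin 0 → 𝕜)),
   inferInstanceAs (Subsingleton (Fin 0 → 𝕜)), inferInstanceAs (Subsingleton (Fin 0 → 𝕜))⟩

noncomputable def isoOfZero (A B : GridRep 𝕜) (hA : A.IsZero) (hB : B.IsZero) : GridIso A B := by
  obtain ⟨a1, a2, a3, a4⟩ := hA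
  obtain ⟨b1, b2, b3, b4⟩ := hB
  exact ⟨LinearEquiv.ofSubsingleton _ _, LinearEquiv.ofSubsingleton _ _,
    LinearEquiv.ofSubsingleton _ _, LinearEquiv.ofSubsingleton _ _,
    extCod _ _, extCod _ _, extCod _ _, extCod _ _⟩

lemma isZero_of_iso {A B : GridRep 𝕜} (e : GridIso A B) (hB : B.IsZero) : A.IsZero := by
  obtain ⟨b1, b2, b3, b4⟩ := hB
  exact ⟨e.e1.toEquiv.subsingleton, e.e2.toEquiv.subsingleton,
    e.e3.toEquiv.subsingleton, e.e4.toEquiv.subsingleton⟩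

lemma dsum_isZero {A B : GridRep 𝕜} (h : (A.dsum B).IsZero) : A.IsZero ∧ B.IsZero := by
  obtain ⟨h1, h2, h3, h4⟩ := h
  constructor
  · exact ⟨(subsingleton_pair (LinearEquiv.refl 𝕜 _) h1).1,
      (subsingleton_pair (LinearEquiv.refl 𝕜 _) h2).1,
      (subsingleton_pair (LinearEquiv.refl 𝕜 _) h3).1,
      (subsingleton_pair (LinearEquiv.refl 𝕜 _) h4).1⟩
  · exact ⟨(subsingleton_pair (LinearEquiv.refl 𝕜 _) h1).2,
      (subsingleton_pair (LinearEquiv.refl 𝕜 _) h2).2,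
      (subsingleton_pair (LinearEquiv.refl 𝕜 _) h3).2,
      (subsingleton_pair (LinearEquiv.refl 𝕜 _) h4).2⟩

def prodUnitEquiv {AV BV : Type} [AddCommGroup AV] [Module 𝕜 AV] [AddCommGroup BV] [Module 𝕜 BV]
    [Subsingleton BV] : (AV × BV) ≃ₗ[𝕜] AV :=
  LinearEquiv.ofLinear (LinearMap.fst 𝕜 AV BV) (LinearMap.inl 𝕜 AV BV)
    (by apply LinearMap.ext; intro a; rfl)
    (by apply LinearMap.ext; intro p; exact Prod.ext rfl (Subsingleton.elim _ _))

def isoDsumZeroRight (A Z : GridRep 𝕜) (hZ : Z.IsZero) : GridIso (A.dsum Z) A := by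
  obtain ⟨z1, z2, z3, z4⟩ := hZ
  exact ⟨prodUnitEquiv, prodUnitEquiv, prodUnitEquiv, prodUnitEquiv,
    by apply LinearMap.ext; intro p; rfl, by apply LinearMap.ext; intro p; rfl,
    by apply LinearMap.ext; intro p; rfl, by apply LinearMap.ext; intro p; rfl⟩

lemma totDim_le_zero_isZero {R : GridRep 𝕜} (h : totDim R ≤ 0) : R.IsZero := by
  have h1 : finrank 𝕜 R.V1 = 0 := by unfold totDim at h; omega
  have h2 : finrank 𝕜 R.V2 = 0 := by unfold totDim at h; omega
  have h3 : finrank 𝕜 R.V3 = 0 := by unfold totDim at h; omega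
  have h4 : finrank 𝕜 R.V4 = 0 := by unfold totDim at h; omega
  exact ⟨Module.finrank_zero_iff.mp h1, Module.finrank_zero_iff.mp h2,
    Module.finrank_zero_iff.mp h3, Module.finrank_zero_iff.mp h4⟩

lemma conclude {R N B : GridRep 𝕜} {n : ℕ}
    (IH : ∀ R' : GridRep 𝕜, totDim R' ≤ n →
      ∃ L, (∀ N' ∈ L, N' ∈ elevenList 𝕜) ∧ Nonempty (GridIso R' (dsumList L)))
    (hmem : N ∈ elevenList 𝕜) (hiso : Nonempty (GridIso R (N.dsum B)))
    (hd : totDim B ≤ n) :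
    ∃ L, (∀ N' ∈ L, N' ∈ elevenList 𝕜) ∧ Nonempty (GridIso R (dsumList L)) := by
  obtain ⟨L, hL, ⟨eB⟩⟩ := IH B hd
  obtain ⟨e⟩ := hiso
  refine ⟨N :: L, ?_, ⟨isoTrans e (isoDsumCongr (isoRefl N) eB)⟩⟩
  intro N' hN'
  rcases List.mem_cons.mp hN' with rfl | h
  · exact hmem
  · exact hL _ h

end Part1



section Main

open Module Submodule

lemma mem1000 (h : ∀ x : ℕ, x < 1 → x < 0 → (x < 0 ↔ x < 0)) :
    M 𝕜 1 0 0 0 h ∈ elevenList 𝕜 := List.mem_cons_self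
lemma mem0100 (h : ∀ x : ℕ, x < 0 → x < 0 → (x < 1 ↔ x < 0)) :
    M 𝕜 0 1 0 0 h ∈ elevenList 𝕜 := by
  unfold elevenList; exact List.mem_cons_of_mem _ (List.mem_cons_self)
lemma mem0010 (h : ∀ x : ℕ, x < 0 → x < 0 → (x < 0 ↔ x < 1)) :
    M 𝕜 0 0 1 0 h ∈ elevenList 𝕜 := by
  unfold elevenList
  exact List.mem_cons_of_mem _ (List.mem_cons_of_mem _ (List.mem_cons_self))
lemma mem0001 (h : ∀ x : ℕ, x < 0 → x < 1 → (x < 0 ↔ x < 0)) :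
    M 𝕜 0 0 0 1 h ∈ elevenList 𝕜 := by
  unfold elevenList
  exact List.mem_cons_of_mem _ (List.mem_cons_of_mem _ (List.mem_cons_of_mem _
    (List.mem_cons_self)))
lemma mem1100 (h : ∀ x : ℕ, x < 1 → x < 0 → (x < 1 ↔ x < 0)) :
    M 𝕜 1 1 0 0 h ∈ elevenList 𝕜 := by
  unfold elevenList
  exact List.mem_cons_of_mem _ (List.mem_cons_of_mem _ (List.mem_cons_of_mem _
    (List.mem_cons_of_mem _ (List.mem_cons_self))))
lemma mem1010 (h : ∀ x : ℕ, x < 1 → x < 0 → (x < 0 ↔ x < 1)) :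
    M 𝕜 1 0 1 0 h ∈ elevenList 𝕜 := by
  unfold elevenList
  exact List.mem_cons_of_mem _ (List.mem_cons_of_mem _ (List.mem_cons_of_mem _
    (List.mem_cons_of_mem _ (List.mem_cons_of_mem _ (List.mem_cons_self)))))
lemma mem0101 (h : ∀ x : ℕ, x < 0 → x < 1 → (x < 1 ↔ x < 0)) :
    M 𝕜 0 1 0 1 h ∈ elevenList 𝕜 := by
  unfold elevenList
  exact List.mem_cons_of_mem _ (List.mem_cons_of_mem _ (List.mem_cons_of_mem _
    (List.mem_cons_of_mem _ (List.mem_cons_of_mem _ (List.mem_cons_of_mem _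
    (List.mem_cons_self))))))
lemma mem0011 (h : ∀ x : ℕ, x < 0 → x < 1 → (x < 0 ↔ x < 1)) :
    M 𝕜 0 0 1 1 h ∈ elevenList 𝕜 := by
  unfold elevenList
  exact List.mem_cons_of_mem _ (List.mem_cons_of_mem _ (List.mem_cons_of_mem _
    (List.mem_cons_of_mem _ (List.mem_cons_of_mem _ (List.mem_cons_of_mem _
    (List.mem_cons_of_mem _ (List.mem_cons_self)))))))
lemma mem1110 (h : ∀ x : ℕ, x < 1 → x < 0 → (x < 1 ↔ x < 1)) :
    M 𝕜 1 1 1 0 h ∈ elevenList 𝕜 := by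
  unfold elevenList
  exact List.mem_cons_of_mem _ (List.mem_cons_of_mem _ (List.mem_cons_of_mem _
    (List.mem_cons_of_mem _ (List.mem_cons_of_mem _ (List.mem_cons_of_mem _
    (List.mem_cons_of_mem _ (List.mem_cons_of_mem _ (List.mem_cons_self))))))))
lemma mem0111 (h : ∀ x : ℕ, x < 0 → x < 1 → (x < 1 ↔ x < 1)) :
    M 𝕜 0 1 1 1 h ∈ elevenList 𝕜 := by
  unfold elevenList
  exact List.mem_cons_of_mem _ (List.mem_cons_of_mem _ (List.mem_cons_of_mem _
    (List.mem_cons_of_mem _ (List.mem_cons_of_mem _ (List.mem_cons_of_mem _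
    (List.mem_cons_of_mem _ (List.mem_cons_of_mem _ (List.mem_cons_of_mem _
    (List.mem_cons_self)))))))))
lemma mem1111 (h : ∀ x : ℕ, x < 1 → x < 1 → (x < 1 ↔ x < 1)) :
    M 𝕜 1 1 1 1 h ∈ elevenList 𝕜 := by
  unfold elevenList
  exact List.mem_cons_of_mem _ (List.mem_cons_of_mem _ (List.mem_cons_of_mem _
    (List.mem_cons_of_mem _ (List.mem_cons_of_mem _ (List.mem_cons_of_mem _
    (List.mem_cons_of_mem _ (List.mem_cons_of_mem _ (List.mem_cons_of_mem _
    (List.mem_cons_of_mem _ (List.mem_cons_self))))))))))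

lemma decompose : ∀ (n : ℕ) (R : GridRep 𝕜), totDim R ≤ n →
    ∃ L : List (GridRep 𝕜), (∀ N ∈ L, N ∈ elevenList 𝕜) ∧ Nonempty (GridIso R (dsumList L)) := by
  intro n
  induction n with
  | zero =>
    intro R hR
    exact ⟨[], fun N h => absurd h List.not_mem_nil,
      ⟨isoOfZero R _ (totDim_le_zero_isZero hR) (M0_isZero _)⟩⟩
  | succ n IH =>
    intro R hR
    by_cases h1 : ∃ x : R.V1, x ≠ 0 ∧ R.f12 x = 0 ∧ R.f13 x = 0
    · -- peel M(1,0,0,0)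
      obtain ⟨x, hx, hf12, hf13⟩ := h1
      obtain ⟨W1, hcW1⟩ := Submodule.exists_isCompl (span 𝕜 {x})
      obtain ⟨hiso, hdim⟩ := peelCase R 1 0 0 0 (by omega) x 0 0 0
        (Or.inr ⟨rfl, hx⟩) (Or.inl ⟨rfl, rfl⟩) (Or.inl ⟨rfl, rfl⟩) (Or.inl ⟨rfl, rfl⟩)
        (Or.inl hf12) (Or.inl hf13) (Or.inr rfl) (Or.inr rfl)
        W1 ⊤ ⊤ ⊤ hcW1 isCompl_span_zero_top isCompl_span_zero_top isCompl_span_zero_top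
        (fun v _ => mem_top) (fun v _ => mem_top) (fun v _ => mem_top) (fun v _ => mem_top)
      exact conclude IH (mem1000 _) hiso (by omega)
    by_cases h2 : ∃ y : R.V4, y ∉ (LinearMap.range R.f24 ⊔ LinearMap.range R.f34)
    · -- peel M(0,0,0,1)
      obtain ⟨y, hy⟩ := h2
      have hy0 : y ≠ 0 := fun h => hy (h ▸ zero_mem _)
      obtain ⟨W4, hle, hcW4⟩ := compl_avoid _ y hy
      obtain ⟨hiso, hdim⟩ := peelCase R 0 0 0 1 (by omega) 0 0 0 y
        (Or.inl ⟨rfl, rfl⟩) (Or.inl ⟨rfl, rfl⟩) (Or.inl ⟨rfl, rfl⟩) (Or.inr ⟨rfl, hy0⟩)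
        (Or.inr rfl) (Or.inr rfl) (Or.inr rfl) (Or.inr rfl)
        ⊤ ⊤ ⊤ W4 isCompl_span_zero_top isCompl_span_zero_top isCompl_span_zero_top hcW4
        (fun v _ => mem_top) (fun v _ => mem_top)
        (fun v _ => hle (Submodule.mem_sup_left (LinearMap.mem_range_self _ v)))
        (fun v _ => hle (Submodule.mem_sup_right (LinearMap.mem_range_self _ v)))
      exact conclude IH (mem0001 _) hiso (by omega)
    by_cases h3 : ∃ x : R.V2, R.f24 x = 0 ∧ x ∉ LinearMap.range R.f12
    · -- peel M(0,1,0,0)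
      obtain ⟨x, hker, hnr⟩ := h3
      have hx0 : x ≠ 0 := fun h => hnr (h ▸ zero_mem _)
      obtain ⟨W2, hle, hcW2⟩ := compl_avoid _ x hnr
      obtain ⟨hiso, hdim⟩ := peelCase R 0 1 0 0 (by omega) 0 x 0 0
        (Or.inl ⟨rfl, rfl⟩) (Or.inr ⟨rfl, hx0⟩) (Or.inl ⟨rfl, rfl⟩) (Or.inl ⟨rfl, rfl⟩)
        (Or.inr rfl) (Or.inr rfl) (Or.inl hker) (Or.inr rfl)
        ⊤ W2 ⊤ ⊤ isCompl_span_zero_top hcW2 isCompl_span_zero_top isCompl_span_zero_top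
        (fun v _ => hle (LinearMap.mem_range_self _ v)) (fun v _ => mem_top)
        (fun v _ => mem_top) (fun v _ => mem_top)
      exact conclude IH (mem0100 _) hiso (by omega)
    by_cases h4 : ∃ x : R.V3, R.f34 x = 0 ∧ x ∉ LinearMap.range R.f13
    · -- peel M(0,0,1,0)
      obtain ⟨x, hker, hnr⟩ := h4
      have hx0 : x ≠ 0 := fun h => hnr (h ▸ zero_mem _)
      obtain ⟨W3, hle, hcW3⟩ := compl_avoid _ x hnr
      obtain ⟨hiso, hdim⟩ := peelCase R 0 0 1 0 (by omega) 0 0 x 0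
        (Or.inl ⟨rfl, rfl⟩) (Or.inl ⟨rfl, rfl⟩) (Or.inr ⟨rfl, hx0⟩) (Or.inl ⟨rfl, rfl⟩)
        (Or.inr rfl) (Or.inr rfl) (Or.inr rfl) (Or.inl hker)
        ⊤ ⊤ W3 ⊤ isCompl_span_zero_top isCompl_span_zero_top hcW3 isCompl_span_zero_top
        (fun v _ => mem_top) (fun v _ => hle (LinearMap.mem_range_self _ v))
        (fun v _ => mem_top) (fun v _ => mem_top)
      exact conclude IH (mem0010 _) hiso (by omega)
    by_cases h5 : ∃ x : R.V2,
        R.f24 x ∉ (LinearMap.range R.f34 ⊔ (LinearMap.range R.f12).map R.f24)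
    · -- peel M(0,1,0,1)
      obtain ⟨x, hnm⟩ := h5
      have hy0 : R.f24 x ≠ 0 := fun h => hnm (h ▸ zero_mem _)
      have hx0 : x ≠ 0 := fun h => hy0 (by rw [h, map_zero])
      obtain ⟨W4, hle, hcW4⟩ := compl_avoid _ (R.f24 x) hnm
      obtain ⟨hiso, hdim⟩ := peelCase R 0 1 0 1 (by omega) 0 x 0 (R.f24 x)
        (Or.inl ⟨rfl, rfl⟩) (Or.inr ⟨rfl, hx0⟩) (Or.inl ⟨rfl, rfl⟩) (Or.inr ⟨rfl, hy0⟩)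
        (Or.inr rfl) (Or.inr rfl) (Or.inl rfl) (Or.inr rfl)
        ⊤ (W4.comap R.f24) ⊤ W4
        isCompl_span_zero_top (compl_preimage R.f24 x (R.f24 x) rfl hy0 hcW4)
        isCompl_span_zero_top hcW4
        (fun v _ => Submodule.mem_comap.mpr
          (hle (Submodule.mem_sup_right
            (Submodule.mem_map_of_mem (LinearMap.mem_range_self _ v)))))
        (fun v _ => mem_top)
        (fun v hv => Submodule.mem_comap.mp hv)
        (fun v _ => hle (Submodule.mem_sup_left (LinearMap.mem_range_self _ v)))
      exact conclude IH (mem0101 _) hiso (by omega)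
    by_cases h6 : ∃ x : R.V3,
        R.f34 x ∉ (LinearMap.range R.f24 ⊔ (LinearMap.range R.f13).map R.f34)
    · -- peel M(0,0,1,1)
      obtain ⟨x, hnm⟩ := h6
      have hy0 : R.f34 x ≠ 0 := fun h => hnm (h ▸ zero_mem _)
      have hx0 : x ≠ 0 := fun h => hy0 (by rw [h, map_zero])
      obtain ⟨W4, hle, hcW4⟩ := compl_avoid _ (R.f34 x) hnm
      obtain ⟨hiso, hdim⟩ := peelCase R 0 0 1 1 (by omega) 0 0 x (R.f34 x)
        (Or.inl ⟨rfl, rfl⟩) (Or.inl ⟨rfl, rfl⟩) (Or.inr ⟨rfl, hx0⟩) (Or.inr ⟨rfl, hy0⟩)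
        (Or.inr rfl) (Or.inr rfl) (Or.inr rfl) (Or.inl rfl)
        ⊤ ⊤ (W4.comap R.f34) W4
        isCompl_span_zero_top isCompl_span_zero_top
        (compl_preimage R.f34 x (R.f34 x) rfl hy0 hcW4) hcW4
        (fun v _ => mem_top)
        (fun v _ => Submodule.mem_comap.mpr
          (hle (Submodule.mem_sup_right
            (Submodule.mem_map_of_mem (LinearMap.mem_range_self _ v)))))
        (fun v _ => hle (Submodule.mem_sup_left (LinearMap.mem_range_self _ v)))
        (fun v hv => Submodule.mem_comap.mp hv)
      exact conclude IH (mem0011 _) hiso (by omega)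
    by_cases h7 : ∃ x : R.V1, R.f24 (R.f12 x) ≠ 0
    · -- peel M(1,1,1,1)
      obtain ⟨x, hy0⟩ := h7
      have hcomm : R.f34 (R.f13 x) = R.f24 (R.f12 x) := by
        have := LinearMap.congr_fun R.comm x
        simp only [LinearMap.comp_apply] at this
        exact this.symm
      have hx1 : x ≠ 0 := fun h => hy0 (by rw [h, map_zero, map_zero])
      have hx2 : R.f12 x ≠ 0 := fun h => hy0 (by rw [h, map_zero])
      have hx3 : R.f13 x ≠ 0 := fun h => hy0 (by rw [← hcomm, h, map_zero])
      obtain ⟨W4, hcW4⟩ := Submodule.exists_isCompl (span 𝕜 {R.f24 (R.f12 x)})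
      obtain ⟨hiso, hdim⟩ := peelCase R 1 1 1 1 (by omega)
        x (R.f12 x) (R.f13 x) (R.f24 (R.f12 x))
        (Or.inr ⟨rfl, hx1⟩) (Or.inr ⟨rfl, hx2⟩) (Or.inr ⟨rfl, hx3⟩) (Or.inr ⟨rfl, hy0⟩)
        (Or.inl rfl) (Or.inl rfl) (Or.inl rfl) (Or.inl hcomm)
        (W4.comap (R.f24 ∘ₗ R.f12)) (W4.comap R.f24) (W4.comap R.f34) W4
        (compl_preimage (R.f24 ∘ₗ R.f12) x _ rfl hy0 hcW4)
        (compl_preimage R.f24 (R.f12 x) _ rfl hy0 hcW4)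
        (compl_preimage R.f34 (R.f13 x) _ hcomm hy0 hcW4)
        hcW4
        (fun v hv => Submodule.mem_comap.mpr hv)
        (fun v hv => Submodule.mem_comap.mpr (by
          have hc := LinearMap.congr_fun R.comm v
          simp only [LinearMap.comp_apply] at hc
          rw [← hc]
          exact hv))
        (fun v hv => Submodule.mem_comap.mp hv)
        (fun v hv => Submodule.mem_comap.mp hv)
      exact conclude IH (mem1111 _) hiso (by omega)
    by_cases h8 : ∃ x : R.V1, x ≠ 0 ∧ R.f13 x = 0
    · -- peel M(1,1,0,0)
      obtain ⟨x, hx0, hf13⟩ := h8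
      have hx2 : R.f12 x ≠ 0 := fun h => h1 ⟨x, hx0, h, hf13⟩
      have h240 : R.f24 (R.f12 x) = 0 := by
        have := LinearMap.congr_fun R.comm x
        simp only [LinearMap.comp_apply] at this
        rw [this, hf13, map_zero]
      obtain ⟨W2, hcW2⟩ := Submodule.exists_isCompl (span 𝕜 {R.f12 x})
      obtain ⟨hiso, hdim⟩ := peelCase R 1 1 0 0 (by omega) x (R.f12 x) 0 0
        (Or.inr ⟨rfl, hx0⟩) (Or.inr ⟨rfl, hx2⟩) (Or.inl ⟨rfl, rfl⟩) (Or.inl ⟨rfl, rfl⟩)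
        (Or.inl rfl) (Or.inl hf13) (Or.inl h240) (Or.inr rfl)
        (W2.comap R.f12) W2 ⊤ ⊤
        (compl_preimage R.f12 x _ rfl hx2 hcW2) hcW2
        isCompl_span_zero_top isCompl_span_zero_top
        (fun v hv => Submodule.mem_comap.mp hv) (fun v _ => mem_top)
        (fun v _ => mem_top) (fun v _ => mem_top)
      exact conclude IH (mem1100 _) hiso (by omega)
    by_cases h9 : ∃ x : R.V1, x ≠ 0 ∧ R.f12 x = 0
    · -- peel M(1,0,1,0)
      obtain ⟨x, hx0, hf12⟩ := h9
      have hx3 : R.f13 x ≠ 0 := fun h => h1 ⟨x, hx0, hf12, h⟩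
      have h340 : R.f34 (R.f13 x) = 0 := by
        have := LinearMap.congr_fun R.comm x
        simp only [LinearMap.comp_apply] at this
        rw [← this, hf12, map_zero]
      obtain ⟨W3, hcW3⟩ := Submodule.exists_isCompl (span 𝕜 {R.f13 x})
      obtain ⟨hiso, hdim⟩ := peelCase R 1 0 1 0 (by omega) x 0 (R.f13 x) 0
        (Or.inr ⟨rfl, hx0⟩) (Or.inl ⟨rfl, rfl⟩) (Or.inr ⟨rfl, hx3⟩) (Or.inl ⟨rfl, rfl⟩)
        (Or.inl hf12) (Or.inl rfl) (Or.inr rfl) (Or.inl h340)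
        (W3.comap R.f13) ⊤ W3 ⊤
        (compl_preimage R.f13 x _ rfl hx3 hcW3) isCompl_span_zero_top hcW3
        isCompl_span_zero_top
        (fun v _ => mem_top) (fun v hv => Submodule.mem_comap.mp hv)
        (fun v _ => mem_top) (fun v _ => mem_top)
      exact conclude IH (mem1010 _) hiso (by omega)
    by_cases h10 : ∃ x : R.V1, x ≠ 0
    · -- peel M(1,1,1,0)
      obtain ⟨x, hx0⟩ := h10
      have hx2 : R.f12 x ≠ 0 := fun h => h9 ⟨x, hx0, h⟩
      have hx3 : R.f13 x ≠ 0 := fun h => h8 ⟨x, hx0, h⟩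
      have h240 : R.f24 (R.f12 x) = 0 := not_not.mp fun h => h7 ⟨x, h⟩
      have h340 : R.f34 (R.f13 x) = 0 := by
        have := LinearMap.congr_fun R.comm x
        simp only [LinearMap.comp_apply] at this
        rw [← this]
        exact h240
      obtain ⟨W1, hcW1⟩ := Submodule.exists_isCompl (span 𝕜 {x})
      have hx2m : R.f12 x ∉ W1.map R.f12 := by
        rintro ⟨w, hw, hwe⟩
        have hxw : x - w = 0 := not_not.mp fun hne =>
          h9 ⟨x - w, hne, by rw [map_sub, hwe, sub_self]⟩
        have hxW : x ∈ W1 := by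
          rw [show x = w from by rw [← sub_eq_zero]; exact hxw]
          exact hw
        exact not_mem_of_isCompl hcW1 hx0 hxW
      have hx3m : R.f13 x ∉ W1.map R.f13 := by
        rintro ⟨w, hw, hwe⟩
        have hxw : x - w = 0 := not_not.mp fun hne =>
          h8 ⟨x - w, hne, by rw [map_sub, hwe, sub_self]⟩
        have hxW : x ∈ W1 := by
          rw [show x = w from by rw [← sub_eq_zero]; exact hxw]
          exact hw
        exact not_mem_of_isCompl hcW1 hx0 hxW
      obtain ⟨W2, hle2, hcW2⟩ := compl_avoid _ (R.f12 x) hx2m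
      obtain ⟨W3, hle3, hcW3⟩ := compl_avoid _ (R.f13 x) hx3m
      obtain ⟨hiso, hdim⟩ := peelCase R 1 1 1 0 (by omega) x (R.f12 x) (R.f13 x) 0
        (Or.inr ⟨rfl, hx0⟩) (Or.inr ⟨rfl, hx2⟩) (Or.inr ⟨rfl, hx3⟩) (Or.inl ⟨rfl, rfl⟩)
        (Or.inl rfl) (Or.inl rfl) (Or.inl h240) (Or.inl h340)
        W1 W2 W3 ⊤ hcW1 hcW2 hcW3 isCompl_span_zero_top
        (fun v hv => hle2 (Submodule.mem_map_of_mem hv))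
        (fun v hv => hle3 (Submodule.mem_map_of_mem hv))
        (fun v _ => mem_top) (fun v _ => mem_top)
      exact conclude IH (mem1110 _) hiso (by omega)
    by_cases h11 : ∃ y : R.V4, y ≠ 0
    · -- peel M(0,1,1,1)
      have hV1 : ∀ z : R.V1, z = 0 := fun z => not_not.mp fun h => h10 ⟨z, h⟩
      have hr12 : ∀ v : R.V1, R.f12 v = 0 := fun v => by rw [hV1 v, map_zero]
      have hr13 : ∀ v : R.V1, R.f13 v = 0 := fun v => by rw [hV1 v, map_zero]
      have hsub24 : ∀ w : R.V2, R.f24 w ∈ LinearMap.range R.f34 := by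
        intro w
        have hmem : R.f24 w ∈ (LinearMap.range R.f34 ⊔ (LinearMap.range R.f12).map R.f24) :=
          not_not.mp fun h => h5 ⟨w, h⟩
        obtain ⟨u, hu, z, hz, huz⟩ := Submodule.mem_sup.mp hmem
        obtain ⟨p, hp, hpe⟩ := hz
        obtain ⟨q, hq⟩ := hp
        have hz0 : z = 0 := by rw [← hpe, ← hq, hr12 q, map_zero]
        rw [← huz, hz0, add_zero]
        exact hu
      have hsub34 : ∀ w : R.V3, R.f34 w ∈ LinearMap.range R.f24 := by
        intro w
        have hmem : R.f34 w ∈ (LinearMap.range R.f24 ⊔ (LinearMap.range R.f13).map R.f34) :=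
          not_not.mp fun h => h6 ⟨w, h⟩
        obtain ⟨u, hu, z, hz, huz⟩ := Submodule.mem_sup.mp hmem
        obtain ⟨p, hp, hpe⟩ := hz
        obtain ⟨q, hq⟩ := hp
        have hz0 : z = 0 := by rw [← hpe, ← hq, hr13 q, map_zero]
        rw [← huz, hz0, add_zero]
        exact hu
      have hy4 : ∀ z : R.V4, z ∈ LinearMap.range R.f24 := by
        intro z
        have hmem : z ∈ LinearMap.range R.f24 ⊔ LinearMap.range R.f34 :=
          not_not.mp fun h => h2 ⟨z, h⟩
        obtain ⟨u, hu, w, hw, huw⟩ := Submodule.mem_sup.mp hmem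
        have hw24 : w ∈ LinearMap.range R.f24 := by
          obtain ⟨p, hp⟩ := hw
          rw [← hp]
          exact hsub34 p
        rw [← huw]
        exact add_mem hu hw24
      have hy3 : ∀ z : R.V4, z ∈ LinearMap.range R.f34 := by
        intro z
        have hmem : z ∈ LinearMap.range R.f24 ⊔ LinearMap.range R.f34 :=
          not_not.mp fun h => h2 ⟨z, h⟩
        obtain ⟨u, hu, w, hw, huw⟩ := Submodule.mem_sup.mp hmem
        have hu34 : u ∈ LinearMap.range R.f34 := by
          obtain ⟨p, hp⟩ := hu
          rw [← hp]
          exact hsub24 p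
        rw [← huw]
        exact add_mem hu34 hw
      obtain ⟨y, hy0⟩ := h11
      obtain ⟨x2, hx2e⟩ := hy4 y
      obtain ⟨x3, hx3e⟩ := hy3 y
      have hx2 : x2 ≠ 0 := fun h => hy0 (by rw [← hx2e, h, map_zero])
      have hx3 : x3 ≠ 0 := fun h => hy0 (by rw [← hx3e, h, map_zero])
      obtain ⟨W4, hcW4⟩ := Submodule.exists_isCompl (span 𝕜 {y})
      obtain ⟨hiso, hdim⟩ := peelCase R 0 1 1 1 (by omega) 0 x2 x3 y
        (Or.inl ⟨rfl, rfl⟩) (Or.inr ⟨rfl, hx2⟩) (Or.inr ⟨rfl, hx3⟩) (Or.inr ⟨rfl, hy0⟩)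
        (Or.inr rfl) (Or.inr rfl) (Or.inl hx2e) (Or.inl hx3e)
        ⊤ (W4.comap R.f24) (W4.comap R.f34) W4
        isCompl_span_zero_top
        (compl_preimage R.f24 x2 y hx2e hy0 hcW4)
        (compl_preimage R.f34 x3 y hx3e hy0 hcW4)
        hcW4
        (fun v _ => Submodule.mem_comap.mpr (by rw [hr12 v, map_zero]; exact zero_mem W4))
        (fun v _ => Submodule.mem_comap.mpr (by rw [hr13 v, map_zero]; exact zero_mem W4))
        (fun v hv => Submodule.mem_comap.mp hv)
        (fun v hv => Submodule.mem_comap.mp hv)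
      exact conclude IH (mem0111 _) hiso (by omega)
    · -- all conditions fail : R is zero
      have hV1 : ∀ z : R.V1, z = 0 := fun z => not_not.mp fun h => h10 ⟨z, h⟩
      have hV4 : ∀ z : R.V4, z = 0 := fun z => not_not.mp fun h => h11 ⟨z, h⟩
      have hV2 : ∀ z : R.V2, z = 0 := by
        intro z
        have hmem : z ∈ LinearMap.range R.f12 := not_not.mp fun h => h3 ⟨z, hV4 _, h⟩
        obtain ⟨v, hv⟩ := hmem
        rw [← hv, hV1 v, map_zero]
      have hV3 : ∀ z : R.V3, z = 0 := by
        intro z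
        have hmem : z ∈ LinearMap.range R.f13 := not_not.mp fun h => h4 ⟨z, hV4 _, h⟩
        obtain ⟨v, hv⟩ := hmem
        rw [← hv, hV1 v, map_zero]
      have hz : R.IsZero :=
        ⟨subsingleton_of_forall_eq 0 hV1, subsingleton_of_forall_eq 0 hV2,
         subsingleton_of_forall_eq 0 hV3, subsingleton_of_forall_eq 0 hV4⟩
      exact ⟨[], fun N h => absurd h List.not_mem_nil,
        ⟨isoOfZero R _ hz (M0_isZero _)⟩⟩

lemma part1 : ∀ R : GridRep 𝕜, R.Indec → ∃ N ∈ elevenList 𝕜, Nonempty (GridIso R N) := by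
  intro R hR
  obtain ⟨L, hL, ⟨e⟩⟩ := decompose (totDim R) R le_rfl
  rcases L with _ | ⟨N, L'⟩
  · exact absurd (isZero_of_iso e (M0_isZero _)) hR.1
  rcases L' with _ | ⟨N', L''⟩
  · exact ⟨N, hL N (List.mem_cons_self),
      ⟨isoTrans e (isoDsumZeroRight N _ (M0_isZero _))⟩⟩
  · exfalso
    rcases hR.2 N (dsumList (N' :: L'')) ⟨e⟩ with hz | hz
    · exact (part2 N (hL N (List.mem_cons_self))).1 hz
    · exact (part2 N' (hL N' (List.mem_cons_of_mem _ (List.mem_cons_self)))).1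
        (dsum_isZero hz).1

end Main

/-- The commutative `2 × 2` grid has exactly eleven isomorphism classes of indecomposable
representations, namely the eleven indicator representations: every indecomposable is
isomorphic to one of them, each of them is indecomposable, and they are pairwise
non-isomorphic. -/
theorem stmt11 (𝕜 : Type) [Field 𝕜] :
    (∀ R : GridRep 𝕜, R.Indec → ∃ N ∈ elevenList 𝕜, Nonempty (GridIso R N)) ∧
    (∀ N ∈ elevenList 𝕜, N.Indec) ∧
    (elevenList 𝕜).Pairwise fun A B => IsEmpty (GridIso A B) :=
  ⟨part1, part2, part3⟩
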